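/- For each natural number q and parameters p, p' that are not nonpositive integers, Σ_{m=0}^{q} (-1)^m / ((p)_m (p')_{q-m}) · L_m^{(p-1)}(-y) · L_{q-m}^{(p'-1)}(y) = ((p+p'-1)/2)_q · ((p+p')/2)_q · (-4y)^q / ((p)_q (p')_q (p+p'-1)_q · q!) as polynomials in y. -/

import Mathlib

open Finset PowerSeries

/-- Pochhammer symbol `(a)_n`. -/
noncomputable def poch (a : ℝ) (n : ℕ) : ℝ := Polynomial.eval a (ascPochhammer ℝ n)


lemma poch_zero (a : ℝ) : poch a 0 = 1 := by simp [poch]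

lemma poch_succ (a : ℝ) (n : ℕ) : poch a (n+1) = poch a n * (a + n) := by
  simp [poch, ascPochhammer_succ_right]

lemma poch_add (a : ℝ) (m n : ℕ) : poch a (m + n) = poch a m * poch (a + m) n := by
  have := ascPochhammer_mul ℝ m n
  have h := congrArg (Polynomial.eval a) this
  simpa [poch, Polynomial.eval_comp] using h.symm

lemma poch_dup (a : ℝ) (q : ℕ) : poch a (2*q) = 4^q * poch (a/2) q * poch ((a+1)/2) q := by
  induction q with
  | zero => simp [poch_zero]
  | succ q ih =>
    have h : 2*(q+1) = (2*q+1)+1 := by ring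
    rw [h, poch_succ, poch_succ, ih, poch_succ, poch_succ]
    push_cast
    ring


/-- Generalized Laguerre polynomial `L_n^{(a)}(x) = ∑_{k=0}^n (-1)^k C(n+a, n-k) x^k / k!`. -/
noncomputable def laguerre (a : ℝ) (n : ℕ) (x : ℝ) : ℝ :=
  ∑ k ∈ Finset.range (n + 1),
    (-1) ^ k * poch (a + k + 1) (n - k) / ((n - k).factorial * k.factorial) * x ^ k

lemma laguerre_expand (p : ℝ) (hp : ∀ k : ℕ, poch p k ≠ 0) (n : ℕ) (x : ℝ) :
    laguerre (p-1) n x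
      = poch p n * ∑ k ∈ range (n+1),
          ((-1:ℝ)^k * x^k / (poch p k * k.factorial)) / (n-k).factorial := by
  unfold laguerre
  rw [Finset.mul_sum]
  refine Finset.sum_congr rfl fun k hk => ?_
  have hkn : k ≤ n := Nat.lt_succ_iff.mp (Finset.mem_range.mp hk)
  have harg : p - 1 + (k:ℝ) + 1 = p + k := by ring
  rw [harg]
  have e1 : poch p n = poch p k * poch (p+k) (n-k) := by
    rw [← poch_add]; congr 1; omega
  rw [e1]
  have h1 : (poch p k) ≠ 0 := hp k
  have h2 : ((n-k).factorial : ℝ) ≠ 0 := Nat.cast_ne_zero.mpr (Nat.factorial_ne_zero _)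
  have h3 : ((k).factorial : ℝ) ≠ 0 := Nat.cast_ne_zero.mpr (Nat.factorial_ne_zero _)
  field_simp

lemma pascal_split (f : ℕ → ℝ) (q : ℕ) :
    ∑ k ∈ range (q+2), (Nat.choose (q+1) k : ℝ) * f k =
      ∑ k ∈ range (q+1), (Nat.choose q k : ℝ) * f k
        + ∑ k ∈ range (q+1), (Nat.choose q k : ℝ) * f (k+1) := by
  rw [Finset.sum_range_succ' (fun k => (Nat.choose (q+1) k : ℝ) * f k) (q+1)]
  have e1 : ∑ k ∈ range (q+1), (Nat.choose (q+1) (k+1) : ℝ) * f (k+1)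
      = ∑ k ∈ range (q+1), (Nat.choose q k : ℝ) * f (k+1)
        + ∑ k ∈ range (q+1), (Nat.choose q (k+1) : ℝ) * f (k+1) := by
    rw [← Finset.sum_add_distrib]
    refine Finset.sum_congr rfl (fun k _ => ?_)
    rw [Nat.choose_succ_succ]; push_cast; ring
  have e2 : ∑ k ∈ range (q+1), (Nat.choose q (k+1) : ℝ) * f (k+1)
        + (Nat.choose (q+1) 0 : ℝ) * f 0
      = ∑ k ∈ range (q+1), (Nat.choose q k : ℝ) * f k := by
    have h := (Finset.sum_range_succ' (fun k => (Nat.choose q k : ℝ) * f k) (q+1)).symm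
    simp only [Nat.choose_zero_right, Nat.cast_one] at h ⊢
    rw [h, Finset.sum_range_succ]
    simp [Nat.choose_succ_self]
  rw [e1, add_assoc, e2]; ring

lemma keySum : ∀ (q : ℕ) (p p' : ℝ),
    ∑ k ∈ range (q+1), (Nat.choose q k : ℝ) * poch (p+k) (q-k) * poch (p' + (q-k : ℕ)) k
      = poch (p + p' + q - 1) q := by
  intro q
  induction q with
  | zero => intro p p'; simp [poch_zero]
  | succ q ih =>
    intro p p'
    have main : ∑ k ∈ range (q+1+1),
        (Nat.choose (q+1) k : ℝ) * (poch (p+k) (q+1-k) * poch (p' + (q+1-k : ℕ)) k)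
        = poch (p + p' + (q+1 : ℕ) - 1) (q+1) := by
      rw [pascal_split (fun k => poch (p+k) (q+1-k) * poch (p' + (q+1-k : ℕ)) k) q]
      have e1 : ∑ k ∈ range (q+1),
          (Nat.choose q k : ℝ) * (poch (p+k) (q+1-k) * poch (p' + (q+1-k : ℕ)) k)
          = (p + q) * poch (p + (p'+1) + q - 1) q := by
        rw [← ih p (p'+1), Finset.mul_sum]
        refine Finset.sum_congr rfl (fun k hk => ?_)
        have hkq : k ≤ q := Nat.lt_succ_iff.mp (Finset.mem_range.mp hk)
        have h1 : q + 1 - k = (q - k) + 1 := by omega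
        rw [h1, poch_succ]
        push_cast [Nat.cast_sub hkq]
        ring_nf
      have e2 : ∑ k ∈ range (q+1),
          (Nat.choose q k : ℝ) * (poch (p+(k+1 : ℕ)) (q+1-(k+1)) * poch (p' + (q+1-(k+1) : ℕ)) (k+1))
          = (p' + q) * poch ((p+1) + p' + q - 1) q := by
        rw [← ih (p+1) p', Finset.mul_sum]
        refine Finset.sum_congr rfl (fun k hk => ?_)
        have hkq : k ≤ q := Nat.lt_succ_iff.mp (Finset.mem_range.mp hk)
        have h1 : q + 1 - (k+1) = q - k := by omega
        rw [h1, poch_succ]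
        push_cast [Nat.cast_sub hkq]
        ring_nf
      rw [e1, e2]
      have h2 : poch (p + (p'+1) + q - 1) q = poch (p + p' + q) q := by ring_nf
      have h3 : poch ((p+1) + p' + q - 1) q = poch (p + p' + q) q := by ring_nf
      have h4 : poch (p + p' + ((q:ℕ)+1:ℕ) - 1) (q+1) = poch (p + p' + q) q * (p + p' + 2*q) := by
        push_cast
        rw [show (p + p' + ((q:ℝ)+1) - 1) = p + p' + q by ring, poch_succ]
        ring
      rw [h2, h3]; push_cast at h4 ⊢; rw [h4]; ring
    rw [show (q+1+1) = q+2 from rfl] at main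
    calc ∑ k ∈ range (q+1+1), (Nat.choose (q+1) k : ℝ) * poch (p+k) (q+1-k) * poch (p' + (q+1-k : ℕ)) k
        = ∑ k ∈ range (q+2), (Nat.choose (q+1) k : ℝ) * (poch (p+k) (q+1-k) * poch (p' + (q+1-k : ℕ)) k) := by
          refine Finset.sum_congr rfl (fun k _ => by ring)
      _ = poch (p + p' + (q+1 : ℕ) - 1) (q+1) := main

lemma sum_inv (p p' : ℝ) (q : ℕ) (hp : ∀ k : ℕ, poch p k ≠ 0) (hp' : ∀ k : ℕ, poch p' k ≠ 0) :
    ∑ k ∈ range (q+1), 1 / (poch p k * k.factorial * poch p' (q-k) * (q-k).factorial)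
      = poch (p + p' + q - 1) q / (poch p q * poch p' q * q.factorial) := by
  rw [← keySum q p p', Finset.sum_div]
  refine Finset.sum_congr rfl fun k hk => ?_
  have hkq : k ≤ q := Nat.lt_succ_iff.mp (Finset.mem_range.mp hk)
  have e1 : poch p q = poch p k * poch (p+k) (q-k) := by
    rw [← poch_add]; congr 1; omega
  have e2 : poch p' q = poch p' (q-k) * poch (p' + (q-k : ℕ)) k := by
    rw [← poch_add]; congr 1; omega
  have e3 : ((Nat.choose q k : ℝ)) * k.factorial * (q-k).factorial = q.factorial := by
    exact_mod_cast Nat.choose_mul_factorial_mul_factorial hkq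
  have hA : poch (p+k) (q-k) ≠ 0 := by
    intro h; exact hp q (by rw [e1, h, mul_zero])
  have hB : poch (p' + (q-k : ℕ)) k ≠ 0 := by
    intro h; exact hp' q (by rw [e2, h, mul_zero])
  rw [e1, e2, ← e3]
  have h1 := hp k; have h2 := hp' (q-k)
  have h3 : ((k).factorial : ℝ) ≠ 0 := Nat.cast_ne_zero.mpr (Nat.factorial_ne_zero _)
  have h4 : (((q-k)).factorial : ℝ) ≠ 0 := Nat.cast_ne_zero.mpr (Nat.factorial_ne_zero _)
  have h5 : (Nat.choose q k : ℝ) ≠ 0 := Nat.cast_ne_zero.mpr (Nat.choose_pos hkq).ne'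
  rw [div_eq_div_iff (by simp [h1, h2, h3, h4]) (by simp [h1, h2, h3, h4, h5, hA, hB])]
  ring

lemma star (u v : ℕ → ℝ) (q : ℕ) :
    ∑ m ∈ range (q+1), (-1:ℝ)^m * (∑ k ∈ range (m+1), u k / (m-k).factorial)
        * (∑ j ∈ range (q-m+1), v j / (q-m-j).factorial)
      = ∑ k ∈ range (q+1), (-1:ℝ)^k * u k * v (q-k) := by
  have coeffE : ∀ n : ℕ, (coeff n) (exp ℝ) = 1 / n.factorial := by
    intro n; rw [coeff_exp]; simp
  set F : ℝ⟦X⟧ := PowerSeries.mk u * exp ℝ with hF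
  set G : ℝ⟦X⟧ := PowerSeries.mk v * exp ℝ with hG
  have cF : ∀ m : ℕ, coeff m F = ∑ k ∈ range (m+1), u k / (m-k).factorial := by
    intro m
    rw [hF, coeff_mul, Finset.Nat.sum_antidiagonal_eq_sum_range_succ_mk]
    exact Finset.sum_congr rfl fun k _ => by rw [coeff_mk, coeffE]; ring
  have cG : ∀ m : ℕ, coeff m G = ∑ j ∈ range (m+1), v j / (m-j).factorial := by
    intro m
    rw [hG, coeff_mul, Finset.Nat.sum_antidiagonal_eq_sum_range_succ_mk]
    exact Finset.sum_congr rfl fun k _ => by rw [coeff_mk, coeffE]; ring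
  have key : rescale (-1 : ℝ) F * G = rescale (-1 : ℝ) (PowerSeries.mk u) * PowerSeries.mk v := by
    rw [hF, hG, map_mul]
    have h1 : rescale (-1 : ℝ) (exp ℝ) * exp ℝ = 1 := by
      have := exp_mul_exp_neg_eq_one (A := ℝ)
      rw [mul_comm] at this
      exact this
    calc rescale (-1:ℝ) (PowerSeries.mk u) * rescale (-1:ℝ) (exp ℝ) * (PowerSeries.mk v * exp ℝ)
        = rescale (-1:ℝ) (PowerSeries.mk u) * PowerSeries.mk v * (rescale (-1:ℝ) (exp ℝ) * exp ℝ) := by ring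
      _ = _ := by rw [h1, mul_one]
  have lhs_eq : ∑ m ∈ range (q+1), (-1:ℝ)^m * (∑ k ∈ range (m+1), u k / (m-k).factorial)
        * (∑ j ∈ range (q-m+1), v j / (q-m-j).factorial)
      = coeff q (rescale (-1:ℝ) F * G) := by
    rw [coeff_mul, Finset.Nat.sum_antidiagonal_eq_sum_range_succ_mk]
    refine Finset.sum_congr rfl fun m _ => ?_
    rw [coeff_rescale, cF, cG]
  rw [lhs_eq, key, coeff_mul, Finset.Nat.sum_antidiagonal_eq_sum_range_succ_mk]
  exact Finset.sum_congr rfl fun k _ => by rw [coeff_rescale, coeff_mk, coeff_mk]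

theorem exton_6_2_corrected (p p' : ℝ) (q : ℕ) (y : ℝ)
    (hp : ∀ k : ℕ, poch p k ≠ 0) (hp' : ∀ k : ℕ, poch p' k ≠ 0)
    (hpp' : ∀ k : ℕ, poch (p + p' - 1) k ≠ 0) :
    ∑ m ∈ Finset.range (q + 1),
        (-1) ^ m / (poch p m * poch p' (q - m)) *
          laguerre (p - 1) m (-y) * laguerre (p' - 1) (q - m) y =
      poch ((p + p' - 1) / 2) q * poch ((p + p') / 2) q * (-4 * y) ^ q /
        (poch p q * poch p' q * poch (p + p' - 1) q * q.factorial) := by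
  have hfac : ∀ n : ℕ, ((n.factorial : ℝ)) ≠ 0 :=
    fun n => Nat.cast_ne_zero.mpr (Nat.factorial_ne_zero _)
  set u : ℕ → ℝ := fun k => y^k / (poch p k * k.factorial) with hu
  set v : ℕ → ℝ := fun j => (-1)^j * y^j / (poch p' j * j.factorial) with hv
  have step1 : ∑ m ∈ Finset.range (q + 1),
        (-1:ℝ) ^ m / (poch p m * poch p' (q - m)) *
          laguerre (p - 1) m (-y) * laguerre (p' - 1) (q - m) y
      = ∑ m ∈ range (q+1), (-1:ℝ)^m * (∑ k ∈ range (m+1), u k / (m-k).factorial)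
          * (∑ j ∈ range (q-m+1), v j / (q-m-j).factorial) := by
    refine Finset.sum_congr rfl fun m _ => ?_
    rw [laguerre_expand p hp m (-y), laguerre_expand p' hp' (q-m) y]
    have e1 : ∑ k ∈ range (m+1), ((-1:ℝ)^k * (-y)^k / (poch p k * k.factorial)) / (m-k).factorial
        = ∑ k ∈ range (m+1), u k / (m-k).factorial := by
      refine Finset.sum_congr rfl fun k _ => ?_
      have : (-1:ℝ)^k * (-y)^k = y^k := by
        rw [← mul_pow]; norm_num
      rw [hu]; simp only []; rw [this]
    have e2 : ∑ j ∈ range (q-m+1), ((-1:ℝ)^j * y^j / (poch p' j * j.factorial)) / (q-m-j).factorial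
        = ∑ j ∈ range (q-m+1), v j / (q-m-j).factorial := rfl
    rw [e1, e2]
    have hA := hp m; have hB := hp' (q-m)
    field_simp
  rw [step1, star u v q]
  have step3 : ∑ k ∈ range (q+1), (-1:ℝ)^k * u k * v (q-k)
      = (-1:ℝ)^q * y^q * ∑ k ∈ range (q+1),
          1 / (poch p k * k.factorial * poch p' (q-k) * (q-k).factorial) := by
    rw [Finset.mul_sum]
    refine Finset.sum_congr rfl fun k hk => ?_
    have hkq : k ≤ q := Nat.lt_succ_iff.mp (Finset.mem_range.mp hk)
    have en : (-1:ℝ)^k * (-1:ℝ)^(q-k) = (-1:ℝ)^q := by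
      rw [← pow_add]; congr 1; omega
    have ey : y^k * y^(q-k) = y^q := by
      rw [← pow_add]; congr 1; omega
    rw [hu, hv]; simp only []
    calc (-1:ℝ)^k * (y^k / (poch p k * k.factorial))
          * ((-1)^(q-k) * y^(q-k) / (poch p' (q-k) * (q-k).factorial))
        = ((-1:ℝ)^k * (-1)^(q-k)) * (y^k * y^(q-k))
            * (1 / (poch p k * k.factorial * poch p' (q-k) * (q-k).factorial)) := by ring
      _ = _ := by rw [en, ey]
  rw [step3, sum_inv p p' q hp hp']
  -- RHS manipulation
  have hpow : (-4*y : ℝ)^q = (-1:ℝ)^q * (4^q * y^q) := by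
    rw [show (-4*y:ℝ) = (-1)*(4*y) by ring, mul_pow, mul_pow]
  have dup := poch_dup (p+p'-1) q
  have split2 : poch (p+p'-1) (2*q) = poch (p+p'-1) q * poch (p+p'+q-1) q := by
    rw [two_mul, poch_add]
    congr 2
    ring
  have key4 : (4:ℝ)^q * poch ((p+p'-1)/2) q * poch ((p+p')/2) q
      = poch (p+p'-1) q * poch (p+p'+q-1) q := by
    rw [← split2, dup]
    congr 2
    ring
  rw [hpow]
  have hnum : poch ((p+p'-1)/2) q * poch ((p+p')/2) q * ((-1:ℝ)^q * (4^q*y^q))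
      = poch (p+p'-1) q * (poch (p+p'+q-1) q * ((-1:ℝ)^q * y^q)) := by
    linear_combination ((-1:ℝ)^q * y^q) * key4
  rw [hnum, show poch p q * poch p' q * poch (p+p'-1) q * (q.factorial:ℝ)
      = poch (p+p'-1) q * (poch p q * poch p' q * q.factorial) by ring,
    mul_div_mul_left _ _ (hpp' q)]
  ring
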